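/- Let $G$ be a $K_{k,k}$-free bipartite graph with parts of size $m$ and $n$. Then the number of edges of $G$ is at most $C_k(n m^{1-1/k} + m)$ for some constant $C_k$ depending only on $k$. -/

import Mathlib

open Finset

/-- Neighborhood in `A` of a vertex `b` of the second part. -/
def nbrA {α β : Type} [DecidableEq α] (E : α → β → Prop) [∀ a b, Decidable (E a b)]
    (A : Finset α) (b : β) : Finset α := A.filter (fun a => E a b)

/-- Neighborhood in `B` of a vertex `a` of the first part. -/
def nbrB {α β : Type} [DecidableEq β] (E : α → β → Prop) [∀ a b, Decidable (E a b)]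
    (B : Finset β) (a : α) : Finset β := B.filter (fun b => E a b)

/-- Common neighborhood in `B` of a set `T` of vertices of the first part. -/
def commonNbr {α β : Type} [DecidableEq β] (E : α → β → Prop) [∀ a b, Decidable (E a b)]
    (B : Finset β) (T : Finset α) : Finset β := B.filter (fun b => ∀ a ∈ T, E a b)

/-- Number of edges of the bipartite graph with parts `A`, `B` and adjacency `E`. -/
def edgeCount {α β : Type} (E : α → β → Prop) [∀ a b, Decidable (E a b)]
    (A : Finset α) (B : Finset β) : ℕ := ((A ×ˢ B).filter (fun p => E p.1 p.2)).card

/-- `K_{k,k}`-freeness of the bipartite graph with parts `A`, `B` and adjacency `E`. -/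
def KFree {α β : Type} (E : α → β → Prop) (A : Finset α) (B : Finset β) (k : ℕ) : Prop :=
  ¬ ∃ S ⊆ A, ∃ T ⊆ B, S.card = k ∧ T.card = k ∧ ∀ a ∈ S, ∀ b ∈ T, E a b

/-- `Z ⊆ A` is shattered by the neighborhoods of the vertices of `B`. -/
def Shatters {α β : Type} [DecidableEq α] (E : α → β → Prop) [∀ a b, Decidable (E a b)]
    (A : Finset α) (B : Finset β) (Z : Finset α) : Prop :=
  ∀ S ⊆ Z, ∃ b ∈ B, nbrA E A b ∩ Z = S

/-- The VC-dimension of the bipartite graph `(A,B,E)` with respect to `A` is at most `d`. -/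
def VCdimLE {α β : Type} [DecidableEq α] (E : α → β → Prop) [∀ a b, Decidable (E a b)]
    (A : Finset α) (B : Finset β) (d : ℕ) : Prop :=
  ∀ Z ⊆ A, Shatters E A B Z → Z.card ≤ d

lemma aux_pow_le_choose : ∀ k n : ℕ, k ≤ n → n ^ k ≤ k ^ k * n.choose k := by
  intro k
  induction k with
  | zero => intro n _; simp
  | succ k ih =>
    intro n hn
    obtain ⟨n, rfl⟩ : ∃ n', n = n' + 1 := ⟨n - 1, by omega⟩
    have hkn : k ≤ n := by omega
    have main : (n+1)^k ≤ (k+1)^k * Nat.choose n k := by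
      rcases Nat.eq_zero_or_pos k with hk0 | hk0
      · subst hk0; simp
      · have h1 : (n+1) * k ≤ n * (k+1) := by nlinarith
        have h2 : ((n+1)*k)^k ≤ (n*(k+1))^k := Nat.pow_le_pow_left h1 k
        have h3 : (n+1)^k * k^k ≤ n^k * (k+1)^k := by
          calc (n+1)^k * k^k = ((n+1)*k)^k := (mul_pow _ _ _).symm
            _ ≤ (n*(k+1))^k := h2
            _ = n^k * (k+1)^k := mul_pow _ _ _
        have h4 : n^k ≤ k^k * Nat.choose n k := ih n hkn
        have h5 : (n+1)^k * k^k ≤ ((k+1)^k * Nat.choose n k) * k^k := by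
          calc (n+1)^k * k^k ≤ n^k * (k+1)^k := h3
            _ ≤ (k^k * Nat.choose n k) * (k+1)^k := Nat.mul_le_mul_right _ h4
            _ = ((k+1)^k * Nat.choose n k) * k^k := by ring
        exact Nat.le_of_mul_le_mul_right h5 (pow_pos hk0 k)
    have hid : (n+1) * Nat.choose n k = Nat.choose (n+1) (k+1) * (k+1) :=
      Nat.add_one_mul_choose_eq n k
    calc (n+1)^(k+1) = (n+1)^k * (n+1) := pow_succ _ _
      _ ≤ ((k+1)^k * Nat.choose n k) * (n+1) := Nat.mul_le_mul_right _ main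
      _ = (k+1)^k * ((n+1) * Nat.choose n k) := by ring
      _ = (k+1)^k * (Nat.choose (n+1) (k+1) * (k+1)) := by rw [hid]
      _ = (k+1)^(k+1) * Nat.choose (n+1) (k+1) := by ring

lemma card_filter_product_fst {α β : Type} [DecidableEq α] [DecidableEq β] (A : Finset α)
    (B : Finset β) (p : α → β → Prop) [∀ a b, Decidable (p a b)] :
    ((A ×ˢ B).filter (fun x => p x.1 x.2)).card = ∑ a ∈ A, (B.filter (fun b => p a b)).card := by
  rw [Finset.card_eq_sum_card_fiberwise
    (f := Prod.fst) (t := A)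
    (fun x hx => (Finset.mem_product.1 (Finset.mem_filter.1 hx).1).1)]
  refine Finset.sum_congr rfl fun a ha => ?_
  have he : ((A ×ˢ B).filter (fun x => p x.1 x.2)).filter (fun x => x.1 = a)
      = (B.filter (fun b => p a b)).image (fun b => (a, b)) := by
    ext x
    simp only [Finset.mem_filter, Finset.mem_product, Finset.mem_image]
    constructor
    · rintro ⟨⟨⟨hxa, hxb⟩, hp⟩, rfl⟩
      exact ⟨x.2, ⟨hxb, hp⟩, rfl⟩
    · rintro ⟨b, ⟨hb, hp⟩, rfl⟩
      exact ⟨⟨⟨ha, hb⟩, hp⟩, rfl⟩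
  rw [he, Finset.card_image_of_injective _ (fun b c h => by injection h)]

lemma card_filter_product_snd {α β : Type} [DecidableEq α] [DecidableEq β] (A : Finset α)
    (B : Finset β) (p : α → β → Prop) [∀ a b, Decidable (p a b)] :
    ((A ×ˢ B).filter (fun x => p x.1 x.2)).card = ∑ b ∈ B, (A.filter (fun a => p a b)).card := by
  rw [Finset.card_eq_sum_card_fiberwise
    (f := Prod.snd) (t := B)
    (fun x hx => (Finset.mem_product.1 (Finset.mem_filter.1 hx).1).2)]
  refine Finset.sum_congr rfl fun b hb => ?_
  have he : ((A ×ˢ B).filter (fun x => p x.1 x.2)).filter (fun x => x.2 = b)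
      = (A.filter (fun a => p a b)).image (fun a => (a, b)) := by
    ext x
    simp only [Finset.mem_filter, Finset.mem_product, Finset.mem_image]
    constructor
    · rintro ⟨⟨⟨hxa, hxb⟩, hp⟩, rfl⟩
      exact ⟨x.1, ⟨hxa, hp⟩, rfl⟩
    · rintro ⟨a, ⟨hA', hp⟩, rfl⟩
      exact ⟨⟨⟨hA', hb⟩, hp⟩, rfl⟩
  rw [he, Finset.card_image_of_injective _ (fun b c h => by injection h)]

lemma sum_choose_le {α β : Type} [DecidableEq α] [DecidableEq β] (E : α → β → Prop)
    [∀ a b, Decidable (E a b)] (A : Finset α) (B : Finset β) (k : ℕ)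
    (hfree : KFree E A B k) :
    ∑ a ∈ A, ((nbrB E B a).card.choose k) ≤ k * B.card.choose k := by
  have h1 := card_filter_product_fst A (B.powersetCard k) (fun a T => ∀ b ∈ T, E a b)
  have h2 := card_filter_product_snd A (B.powersetCard k) (fun a T => ∀ b ∈ T, E a b)
  have h3 : ∀ a : α, (B.powersetCard k).filter (fun T => ∀ b ∈ T, E a b)
      = (nbrB E B a).powersetCard k := by
    intro a
    ext T
    simp only [Finset.mem_filter, Finset.mem_powersetCard, nbrB, Finset.subset_iff,
      Finset.mem_filter]
    constructor
    · rintro ⟨⟨hTB, hcard⟩, hE⟩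
      exact ⟨fun x hx => ⟨hTB hx, hE x hx⟩, hcard⟩
    · rintro ⟨h, hcard⟩
      exact ⟨⟨fun x hx => (h hx).1, hcard⟩, fun b hb => (h hb).2⟩
  have h4 : ∀ T ∈ B.powersetCard k, (A.filter (fun a => ∀ b ∈ T, E a b)).card ≤ k := by
    intro T hT
    by_contra hcon
    push_neg at hcon
    obtain ⟨S, hS, hScard⟩ := Finset.exists_subset_card_eq hcon.le
    rw [Finset.mem_powersetCard] at hT
    exact hfree ⟨S, hS.trans (Finset.filter_subset _ _), T, hT.1, hScard, hT.2,
      fun a ha b hb => (Finset.mem_filter.1 (hS ha)).2 b hb⟩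
  calc ∑ a ∈ A, ((nbrB E B a).card.choose k)
      = ∑ a ∈ A, ((nbrB E B a).powersetCard k).card := by
        simp [Finset.card_powersetCard]
    _ = ∑ a ∈ A, ((B.powersetCard k).filter (fun T => ∀ b ∈ T, E a b)).card := by
        simp [h3]
    _ = ∑ T ∈ B.powersetCard k, (A.filter (fun a => ∀ b ∈ T, E a b)).card := by
        rw [← h1, h2]
    _ ≤ ∑ _T ∈ B.powersetCard k, k := Finset.sum_le_sum h4
    _ = (B.powersetCard k).card * k := by rw [Finset.sum_const, smul_eq_mul]
    _ = k * B.card.choose k := by rw [Finset.card_powersetCard, mul_comm]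

/-- Asymmetric Kővári–Sós–Turán theorem: a `K_{k,k}`-free bipartite graph with parts of
size `m` and `n` has at most `C_k (n m^{1-1/k} + m)` edges. -/
theorem stmt_0 (k : ℕ) (hk : 1 ≤ k) :
    ∃ C : ℝ, 0 < C ∧
      ∀ (α β : Type) [DecidableEq α] [DecidableEq β]
        (E : α → β → Prop) [∀ a b, Decidable (E a b)] (A : Finset α) (B : Finset β)
        (m n : ℕ), A.card = m → B.card = n → KFree E A B k →
        (edgeCount E A B : ℝ) ≤ C * ((n : ℝ) * (m : ℝ) ^ (1 - 1 / (k : ℝ)) + (m : ℝ)) := by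
  obtain ⟨k, rfl⟩ : ∃ k', k = k' + 1 := ⟨k - 1, by omega⟩
  set K : ℝ := (k : ℝ) + 1 with hKdef
  have hK0 : 0 < K := by positivity
  have hK1 : (1:ℝ) ≤ K := by rw [hKdef]; have : (0:ℝ) ≤ (k:ℝ) := by positivity
                             linarith
  refine ⟨K ^ 2 + K + 1, by positivity, ?_⟩
  intro α β _ _ E _ A B m n hA hB hfree
  subst hA hB
  have hKcast : ((k + 1 : ℕ) : ℝ) = K := by push_cast [hKdef]; ring
  by_cases hm : A.card = 0
  · have hA0 : A = ∅ := Finset.card_eq_zero.1 hm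
    have h0 : edgeCount E A B = 0 := by simp [edgeCount, hA0]
    rw [h0, hm]
    have h1 : (0:ℝ) ≤ ((0:ℕ):ℝ) ^ (1 - 1/((k+1:ℕ):ℝ)) := Real.rpow_nonneg (by norm_num) _
    push_cast
    positivity
  by_cases hn : B.card = 0
  · have hB0 : B = ∅ := Finset.card_eq_zero.1 hn
    have h0 : edgeCount E A B = 0 := by simp [edgeCount, hB0]
    rw [h0, hn]
    have h1 : (0:ℝ) ≤ ((A.card:ℕ):ℝ) ^ (1 - 1/((k+1:ℕ):ℝ)) := Real.rpow_nonneg (by positivity) _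
    push_cast
    positivity
  -- main case
  have hM1 : (1:ℝ) ≤ (A.card : ℝ) := by exact_mod_cast Nat.one_le_iff_ne_zero.2 hm
  have hN1 : (1:ℝ) ≤ (B.card : ℝ) := by exact_mod_cast Nat.one_le_iff_ne_zero.2 hn
  set M : ℝ := (A.card : ℝ) with hMdef
  set N : ℝ := (B.card : ℝ) with hNdef
  have hM0 : 0 < M := by linarith
  have hN0 : 0 < N := by linarith
  set r : ℝ := M ^ (1 / K) with hrdef
  have hr0 : 0 < r := Real.rpow_pos_of_pos hM0 _
  set y : ℝ := M ^ (1 - 1 / K) with hydef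
  have hy0 : 0 < y := Real.rpow_pos_of_pos hM0 _
  have hexp : (1 / K) * (k : ℝ) = 1 - 1 / K := by
    rw [hKdef]; field_simp; ring
  have hry : r ^ k = y := by
    rw [hrdef, hydef, ← Real.rpow_natCast (M ^ (1/K)) k, ← Real.rpow_mul hM0.le, hexp]
  have hMry : M / r = y := by
    rw [hydef, Real.rpow_sub hM0, Real.rpow_one, hrdef]
  set x : ℝ := K * N / r with hxdef
  have hx0 : 0 < x := by positivity
  set t : ℕ := max (k + 1) ⌈x⌉₊ with htdef
  have htk : k + 1 ≤ t := le_max_left _ _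
  have htx : x ≤ (t : ℝ) := le_trans (Nat.le_ceil x) (by exact_mod_cast le_max_right _ _)
  have htub : (t : ℝ) ≤ K + x + 1 := by
    have h1 : t ≤ (k + 1) + ⌈x⌉₊ := by omega
    have h2 : (⌈x⌉₊ : ℝ) < x + 1 := Nat.ceil_lt_add_one hx0.le
    have h3 : (t : ℝ) ≤ ((k+1:ℕ):ℝ) + (⌈x⌉₊ : ℝ) := by exact_mod_cast h1
    rw [hKcast] at h3
    linarith
  set d : α → ℕ := fun a => (nbrB E B a).card with hddef
  have hedge : edgeCount E A B = ∑ a ∈ A, d a := by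
    rw [edgeCount]
    exact card_filter_product_fst A B E
  have hsplit : ∑ a ∈ A, d a
      = ∑ a ∈ A.filter (fun a => t ≤ d a), d a + ∑ a ∈ A.filter (fun a => ¬ t ≤ d a), d a :=
    (Finset.sum_filter_add_sum_filter_not A _ d).symm
  have hlight : ∑ a ∈ A.filter (fun a => ¬ t ≤ d a), d a ≤ t * A.card := by
    calc ∑ a ∈ A.filter (fun a => ¬ t ≤ d a), d a
        ≤ ∑ _a ∈ A.filter (fun a => ¬ t ≤ d a), t :=
          Finset.sum_le_sum (fun a ha => by
            have := (Finset.mem_filter.1 ha).2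
            omega)
      _ = (A.filter (fun a => ¬ t ≤ d a)).card * t := by rw [Finset.sum_const, smul_eq_mul]
      _ ≤ A.card * t := Nat.mul_le_mul_right _ (Finset.card_le_card (Finset.filter_subset _ _))
      _ = t * A.card := Nat.mul_comm _ _
  have hheavy : (∑ a ∈ A.filter (fun a => t ≤ d a), d a) * t ^ k
      ≤ (k+1) ^ (k + 2) * B.card ^ (k+1) := by
    have h1 : ∀ a ∈ A.filter (fun a => t ≤ d a),
        d a * t ^ k ≤ (k+1)^(k+1) * (d a).choose (k+1) := by
      intro a ha
      have hta : t ≤ d a := (Finset.mem_filter.1 ha).2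
      calc d a * t ^ k ≤ d a * (d a) ^ k :=
            Nat.mul_le_mul_left _ (Nat.pow_le_pow_left hta k)
        _ = (d a) ^ (k+1) := (pow_succ' _ _).symm
        _ ≤ (k+1)^(k+1) * (d a).choose (k+1) := aux_pow_le_choose (k+1) (d a) (le_trans htk hta)
    calc (∑ a ∈ A.filter (fun a => t ≤ d a), d a) * t ^ k
        = ∑ a ∈ A.filter (fun a => t ≤ d a), d a * t ^ k := Finset.sum_mul ..
      _ ≤ ∑ a ∈ A.filter (fun a => t ≤ d a), (k+1)^(k+1) * (d a).choose (k+1) :=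
          Finset.sum_le_sum h1
      _ ≤ ∑ a ∈ A, (k+1)^(k+1) * (d a).choose (k+1) :=
          Finset.sum_le_sum_of_subset (Finset.filter_subset _ _)
      _ = (k+1)^(k+1) * ∑ a ∈ A, (d a).choose (k+1) := (Finset.mul_sum ..).symm
      _ ≤ (k+1)^(k+1) * ((k+1) * B.card.choose (k+1)) :=
          Nat.mul_le_mul_left _ (sum_choose_le E A B (k+1) hfree)
      _ ≤ (k+1)^(k+1) * ((k+1) * B.card ^ (k+1)) :=
          Nat.mul_le_mul_left _ (Nat.mul_le_mul_left _ (Nat.choose_le_pow _ _))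
      _ = (k+1) ^ (k+2) * B.card ^ (k+1) := by ring
  obtain ⟨SH, hSHdef⟩ : ∃ S : ℝ, S = ((∑ a ∈ A.filter (fun a => t ≤ d a), d a : ℕ) : ℝ) :=
    ⟨_, rfl⟩
  obtain ⟨SL, hSLdef⟩ : ∃ S : ℝ, S = ((∑ a ∈ A.filter (fun a => ¬ t ≤ d a), d a : ℕ) : ℝ) :=
    ⟨_, rfl⟩
  clear_value K M N r y x t d
  have hSH0 : 0 ≤ SH := by rw [hSHdef]; exact Nat.cast_nonneg _
  have hheavyR : SH * x ^ k ≤ K ^ (k + 2) * N ^ (k+1) := by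
    have h1 : SH * (t:ℝ) ^ k ≤ K ^ (k+2) * N ^ (k+1) := by
      have hcast := (Nat.cast_le (α := ℝ)).2 hheavy
      push_cast at hcast
      rw [hSHdef, hNdef, hKdef]
      push_cast
      linarith [hcast]
    have h2 : x ^ k ≤ (t:ℝ) ^ k := pow_le_pow_left₀ hx0.le htx k
    calc SH * x ^ k ≤ SH * (t:ℝ) ^ k := mul_le_mul_of_nonneg_left h2 hSH0
      _ ≤ K ^ (k + 2) * N ^ (k+1) := h1
  have hxk : x ^ k * y = K ^ k * N ^ k := by
    rw [hxdef, div_pow, ← hry, div_mul_cancel₀ _ (pow_ne_zero k hr0.ne'), mul_pow]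
  have hheavyR2 : SH ≤ K ^ 2 * N * y := by
    have hgoal : SH * x ^ k ≤ (K ^ 2 * N * y) * x ^ k := by
      have heq : (K ^ 2 * N * y) * x ^ k = K ^ (k+2) * N ^ (k+1) := by
        calc (K ^ 2 * N * y) * x ^ k = K ^ 2 * N * (x ^ k * y) := by ring
          _ = K ^ 2 * N * (K ^ k * N ^ k) := by rw [hxk]
          _ = K ^ (k+2) * N ^ (k+1) := by ring
      rw [heq]; exact hheavyR
    exact le_of_mul_le_mul_right hgoal (pow_pos hx0 k)
  have hlightR : SL ≤ (K + 1) * M + K * N * y := by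
    have h1 : SL ≤ (t:ℝ) * M := by
      have := (Nat.cast_le (α := ℝ)).2 hlight
      push_cast at this
      rw [hSLdef, hMdef]
      push_cast
      exact this
    have h2 : (t:ℝ) * M ≤ (K + x + 1) * M := mul_le_mul_of_nonneg_right htub hM0.le
    have h3 : x * M = K * N * y := by
      rw [hxdef, ← hMry]
      ring
    calc SL ≤ (K + x + 1) * M := h1.trans h2
      _ = (K + 1) * M + x * M := by ring
      _ = (K + 1) * M + K * N * y := by rw [h3]
  have hEe : (edgeCount E A B : ℝ) = SH + SL := by
    rw [hedge, hsplit, Nat.cast_add, ← hSHdef, ← hSLdef]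
  rw [hEe, hKcast]
  rw [← hydef]
  have e1 : 0 ≤ N * y := (mul_pos hN0 hy0).le
  have e2 : 0 ≤ K ^ 2 * M := by positivity
  linarith [hheavyR2, hlightR, e1, e2]
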